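/- arXiv:0711.2419 — 3 statements merged into one kernel-verified Lean document; each statement's English description precedes it below -/
import Mathlib

section
/- If a Markov semigroup P_t with carré du champ Γ satisfies the gradient bound Γ(P_t f, P_t f)(e) ≤ K P_t(Γ(f,f))(e) for all test functions f and all t ≥ 0 (with constant K > 0), and the interpolation identity of Theorem 4.1 holds, then for each t > 0 the local Poincaré inequality P_t(f²)(e) − (P_t f(e))² ≤ K t · P_t(Γ(f,f))(e) holds, i.e., the spectral gap constant may be taken a_t = 1/(2Kt). -/
open MeasureTheory

/-- with the constant gradient bound `Γ(P_t f, P_t f) ≤ K P_t(Γ(f,f))`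
(Driver–Melcher) and the interpolation identity of Theorem 4.1, the local
Poincaré inequality `P_t(f²)(e) − (P_t f(e))² ≤ K t · P_t(Γ(f,f))(e)` holds,
i.e. the spectral gap constant can be taken `a_t = 1/(2Kt)`. -/
theorem stmt6 {G : Type*} (P : ℝ → (G → ℝ) → (G → ℝ))
    (Γ : (G → ℝ) → (G → ℝ) → (G → ℝ)) (K : ℝ) (hK : 0 < K) (e : G)
    (hP0 : ∀ g : G → ℝ, P 0 g = g)
    (hsemigroup : ∀ s u : ℝ, 0 ≤ s → 0 ≤ u → ∀ g : G → ℝ, P s (P u g) = P (s + u) g)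
    (hmono : ∀ s : ℝ, 0 ≤ s → ∀ g h : G → ℝ, (∀ x, g x ≤ h x) → ∀ x, P s g x ≤ P s h x)
    (hsmul : ∀ s : ℝ, 0 ≤ s → ∀ (c : ℝ) (g : G → ℝ), P s (fun x => c * g x) = fun x => c * P s g x)
    (hgrad : ∀ u : ℝ, 0 ≤ u → ∀ g : G → ℝ, ∀ x,
      Γ (P u g) (P u g) x ≤ K * P u (Γ g g) x)
    (t : ℝ) (ht : 0 < t) (f : G → ℝ)
    (hderiv : ∀ x : G, ∀ s ∈ Set.Icc (0:ℝ) t,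
      HasDerivAt (fun s' => P s' (fun y => (P (t - s') f y) ^ 2) x)
        (P s (Γ (P (t - s) f) (P (t - s) f)) x) s) :
    P t (fun y => (f y) ^ 2) e - (P t f e) ^ 2 ≤ K * t * P t (Γ f f) e := by
  set C : ℝ := K * P t (Γ f f) e with hC
  set F : ℝ → ℝ := fun s => P s (fun y => (P (t - s) f y) ^ 2) e with hF
  -- pointwise bound on the derivative
  have hbound : ∀ s ∈ Set.Icc (0:ℝ) t,
      P s (Γ (P (t - s) f) (P (t - s) f)) e ≤ C := by
    intro s hs
    have hs0 : 0 ≤ s := hs.1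
    have hts : 0 ≤ t - s := sub_nonneg.2 hs.2
    have h1 := hgrad (t - s) hts f
    have h2 := hmono s hs0 _ _ h1 e
    have h3 : P s (fun x => K * P (t - s) (Γ f f) x) e
        = K * P s (P (t - s) (Γ f f)) e := by
      rw [hsmul s hs0 K (P (t - s) (Γ f f))]
    have h4 : P s (P (t - s) (Γ f f)) = P t (Γ f f) := by
      rw [hsemigroup s (t - s) hs0 hts, add_sub_cancel]
    calc P s (Γ (P (t - s) f) (P (t - s) f)) e
        ≤ P s (fun x => K * P (t - s) (Γ f f) x) e := h2
      _ = K * P s (P (t - s) (Γ f f)) e := h3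
      _ = C := by rw [h4]
  -- the auxiliary function C*s - F s is monotone on [0, t]
  have hmonoF : MonotoneOn (fun s => C * s - F s) (Set.Icc 0 t) := by
    apply monotoneOn_of_hasDerivWithinAt_nonneg (convex_Icc 0 t)
      (f' := fun s => C - P s (Γ (P (t - s) f) (P (t - s) f)) e)
    · intro s hs
      have hFc : ContinuousAt F s := (hderiv e s hs).continuousAt
      exact (((continuous_const.mul continuous_id).continuousAt).sub hFc).continuousWithinAt
    · intro s hs
      rw [interior_Icc] at hs
      have hs' : s ∈ Set.Icc (0:ℝ) t := ⟨hs.1.le, hs.2.le⟩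
      have hd : HasDerivAt (fun s' => C * s' - F s')
          (C - P s (Γ (P (t - s) f) (P (t - s) f)) e) s := by
        have := ((hasDerivAt_id s).const_mul C).sub (hderiv e s hs')
        simpa only [id_eq, mul_one, Pi.sub_def] using this
      exact hd.hasDerivWithinAt
    · intro s hs
      rw [interior_Icc] at hs
      exact sub_nonneg.2 (hbound s ⟨hs.1.le, hs.2.le⟩)
  have key : C * 0 - F 0 ≤ C * t - F t :=
    hmonoF (Set.left_mem_Icc.2 ht.le) (Set.right_mem_Icc.2 ht.le) ht.le
  have hF0 : F 0 = (P t f e) ^ 2 := by simp [hF, hP0, sub_zero]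
  have hFt : F t = P t (fun y => (f y) ^ 2) e := by
    simp [hF, sub_self, hP0]
  rw [hF0, hFt, mul_zero, zero_sub] at key
  nlinarith [key]
end

section
/- Let u : [0,∞) → [0,∞) be differentiable and satisfy u'(t) ≤ −α/(R+t) · u(t) + β/(R+t) · u(t) + 2β/(R+t) · √(u(t)) for all t ≥ 0, where α > 3β > 0 and R > 0. Then sup_{t≥0} u(t) ≤ max(u(0), (2β/(α−β))²). -/
/-- ODE comparison for the annealing estimate: if `u ≥ 0` satisfies
`u' ≤ −α/(R+t) u + β/(R+t) u + 2β/(R+t) √u` with `α > 3β > 0` and `R > 0`, then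
`sup_{t ≥ 0} u(t) ≤ max (u 0) ((2β/(α−β))²)`. -/
theorem stmt7 (u u' : ℝ → ℝ) (α β R : ℝ)
    (hβ : 0 < β) (hαβ : 3 * β < α) (hR : 0 < R)
    (hu_nonneg : ∀ t, 0 ≤ t → 0 ≤ u t)
    (hu_deriv : ∀ t, 0 ≤ t → HasDerivAt u (u' t) t)
    (hu_ineq : ∀ t, 0 ≤ t →
      u' t ≤ -α / (R + t) * u t + β / (R + t) * u t + 2 * β / (R + t) * Real.sqrt (u t)) :
    ∀ t, 0 ≤ t → u t ≤ max (u 0) ((2 * β / (α - β)) ^ 2) := by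
  intro t ht
  set M : ℝ := (2 * β / (α - β)) ^ 2 with hM
  have hαβ' : 0 < α - β := by linarith
  have hden : 0 < 2 * β / (α - β) := by positivity
  refine le_of_forall_pos_le_add ?_
  intro ε hε
  have hcont : ContinuousOn u (Set.Icc 0 t) := fun x hx =>
    ((hu_deriv x hx.1).continuousAt.continuousWithinAt)
  have hder : ∀ x ∈ Set.Ico (0:ℝ) t, HasDerivWithinAt u (u' x) (Set.Ici x) x := fun x hx =>
    (hu_deriv x hx.1).hasDerivWithinAt
  have ha : u 0 ≤ max (u 0) M + ε := by
    have := le_max_left (u 0) M; linarith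
  have hB : ∀ x : ℝ, HasDerivAt (fun _ : ℝ => max (u 0) M + ε) 0 x := fun x =>
    hasDerivAt_const x _
  have bound : ∀ x ∈ Set.Ico (0:ℝ) t, u x = max (u 0) M + ε → u' x < 0 := by
    intro x hx heq
    have hx0 : (0:ℝ) ≤ x := hx.1
    have hRx : 0 < R + x := by linarith
    have hMlt : M < u x := by
      have := le_max_right (u 0) M; linarith
    set s : ℝ := Real.sqrt (u x) with hs
    have hsq : s ^ 2 = u x := Real.sq_sqrt (hu_nonneg x hx0)
    have hslt : 2 * β / (α - β) < s := by
      have h1 : Real.sqrt M < s := Real.sqrt_lt_sqrt (by positivity) hMlt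
      rwa [hM, Real.sqrt_sq hden.le] at h1
    have hspos : 0 < s := lt_trans hden hslt
    have h2 : 2 * β < s * (α - β) := (div_lt_iff₀ hαβ').mp hslt
    have h3 := hu_ineq x hx0
    have h4 : -α / (R + x) * u x + β / (R + x) * u x + 2 * β / (R + x) * s
        = s * (2 * β - (α - β) * s) / (R + x) := by
      rw [← hsq]; field_simp; ring
    have h5 : s * (2 * β - (α - β) * s) / (R + x) < 0 :=
      div_neg_of_neg_of_pos (by nlinarith) hRx
    calc u' x ≤ _ := h3
      _ < 0 := by rw [h4] at *; exact h5
  have := image_le_of_deriv_right_lt_deriv_boundary hcont hder ha hB bound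
  exact this ⟨ht, le_refl t⟩
end

section
/- Let U : M → ℝ be continuous on a compact metric measure space (M, μ) with μ(M) > 0 and μ giving positive mass to every nonempty open set. For ε > 0 define the Gibbs measure μ_ε(dx) = Z_ε^{−1} exp(−U(x)/ε²) μ(dx). Then for every δ > 0, lim_{ε→0} μ_ε({x : U(x) ≥ inf U + δ}) = 0. -/
open MeasureTheory Filter

/-- concentration of Gibbs measures: on a compact metric measure
space with `μ` charging every nonempty open set, for continuous `U` and every
`δ > 0`, the Gibbs measure `μ_ε = Z_ε^{-1} e^{-U/ε²} μ` of the set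
`{U ≥ inf U + δ}` tends to `0` as `ε → 0⁺`. -/
theorem stmt9 {M : Type*} [MetricSpace M] [CompactSpace M] [Nonempty M]
    [MeasurableSpace M] [BorelSpace M]
    (μ : Measure M) [IsFiniteMeasure μ] (hμ : 0 < μ Set.univ)
    (hμ_open : ∀ O : Set M, IsOpen O → O.Nonempty → 0 < μ O)
    (U : M → ℝ) (hU : Continuous U) :
    ∀ δ : ℝ, 0 < δ →
      Tendsto
        (fun ε : ℝ =>
          (∫ x in {x : M | (⨅ y, U y) + δ ≤ U x}, Real.exp (-U x / ε ^ 2) ∂μ) /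
            (∫ x, Real.exp (-U x / ε ^ 2) ∂μ))
        (nhdsWithin 0 (Set.Ioi 0)) (nhds 0) := by
  intro δ hδ
  -- minimizer of U
  obtain ⟨x₀, -, hx₀⟩ := isCompact_univ.exists_isMinOn Set.univ_nonempty hU.continuousOn
  have hmin : ∀ y, U x₀ ≤ U y := fun y => hx₀ (Set.mem_univ y)
  set m : ℝ := ⨅ y, U y with hm
  have hbdd : BddBelow (Set.range U) := ⟨U x₀, by rintro r ⟨y, rfl⟩; exact hmin y⟩
  have hx₀m : U x₀ ≤ m := le_ciInf hmin
  -- the open set where U < m + δ/2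
  set O : Set M := {x | U x < m + δ / 2} with hO
  have hOopen : IsOpen O := isOpen_lt hU continuous_const
  have hOne : O.Nonempty := ⟨x₀, lt_of_le_of_lt hx₀m (by linarith)⟩
  have hμO : 0 < μ O := hμ_open O hOopen hOne
  set KO : ℝ := (μ O).toReal with hKO
  set KU : ℝ := (μ Set.univ).toReal with hKU
  have hKOpos : 0 < KO := ENNReal.toReal_pos hμO.ne' (measure_ne_top μ O)
  have hKUnn : 0 ≤ KU := ENNReal.toReal_nonneg
  set A : Set M := {x : M | m + δ ≤ U x} with hA
  have hAmeas : MeasurableSet A :=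
    (isClosed_le continuous_const hU).measurableSet
  have hOmeas : MeasurableSet O := hOopen.measurableSet
  -- the dominating function tends to 0
  have hg : Tendsto (fun ε : ℝ => Real.exp (-(δ / 2) / ε ^ 2) * (KU / KO))
      (nhdsWithin 0 (Set.Ioi 0)) (nhds 0) := by
    have h1 : Tendsto (fun ε : ℝ => ε ^ 2) (nhdsWithin 0 (Set.Ioi 0))
        (nhdsWithin 0 (Set.Ioi 0)) := by
      apply tendsto_nhdsWithin_of_tendsto_nhds_of_eventually_within
      · have := ((continuous_pow 2).tendsto (0 : ℝ)).mono_left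
          (nhdsWithin_le_nhds (s := Set.Ioi (0 : ℝ)))
        simpa using this
      · filter_upwards [self_mem_nhdsWithin] with ε hε
        exact pow_pos (show (0:ℝ) < ε from hε) 2
    have h2 : Tendsto (fun ε : ℝ => (ε ^ 2)⁻¹) (nhdsWithin 0 (Set.Ioi 0)) atTop :=
      tendsto_inv_nhdsGT_zero.comp h1
    have h3 : Tendsto (fun ε : ℝ => (δ / 2) * (ε ^ 2)⁻¹)
        (nhdsWithin 0 (Set.Ioi 0)) atTop := h2.const_mul_atTop (half_pos hδ)
    have h4 : Tendsto (fun ε : ℝ => -(δ / 2) / ε ^ 2)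
        (nhdsWithin 0 (Set.Ioi 0)) atBot := by
      have := tendsto_neg_atTop_atBot.comp h3
      refine this.congr fun ε => ?_
      simp [div_eq_mul_inv, neg_mul, Function.comp]
    have h5 := Real.tendsto_exp_atBot.comp h4
    have := h5.mul_const (KU / KO)
    simpa using this
  apply squeeze_zero' _ _ hg
  · filter_upwards [self_mem_nhdsWithin] with ε hε
    refine div_nonneg ?_ ?_
    · exact setIntegral_nonneg hAmeas fun x _ => (Real.exp_pos _).le
    · exact integral_nonneg fun x => (Real.exp_pos _).le
  · filter_upwards [self_mem_nhdsWithin] with ε hε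
    have hε2 : (0 : ℝ) < ε ^ 2 := pow_pos hε 2
    have hcont : Continuous fun x => Real.exp (-U x / ε ^ 2) :=
      Real.continuous_exp.comp (hU.neg.div_const _)
    have hInt : Integrable (fun x => Real.exp (-U x / ε ^ 2)) μ := by
      have := hcont.continuousOn.integrableOn_compact (isCompact_univ (X := M)) (μ := μ)
      rwa [integrableOn_univ] at this
    -- numerator bound
    have hN : (∫ x in A, Real.exp (-U x / ε ^ 2) ∂μ) ≤
        Real.exp (-(m + δ) / ε ^ 2) * KU := by
      have h1 : (∫ x in A, Real.exp (-U x / ε ^ 2) ∂μ) ≤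
          ∫ _ in A, Real.exp (-(m + δ) / ε ^ 2) ∂μ := by
        refine setIntegral_mono_on hInt.integrableOn
          (integrableOn_const (measure_ne_top μ A)) hAmeas fun x hx => ?_
        have hx' : m + δ ≤ U x := hx
        exact Real.exp_le_exp.2 ((div_le_div_iff_of_pos_right hε2).2 (by linarith))
      have h2 : (∫ _ in A, Real.exp (-(m + δ) / ε ^ 2) ∂μ) =
          (μ A).toReal * Real.exp (-(m + δ) / ε ^ 2) := by
        rw [setIntegral_const, smul_eq_mul]
        rfl
      have h3 : (μ A).toReal ≤ KU :=
        ENNReal.toReal_mono (measure_ne_top μ _) (measure_mono (Set.subset_univ A))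
      calc (∫ x in A, Real.exp (-U x / ε ^ 2) ∂μ)
          ≤ (μ A).toReal * Real.exp (-(m + δ) / ε ^ 2) := h1.trans_eq h2
        _ ≤ KU * Real.exp (-(m + δ) / ε ^ 2) :=
            mul_le_mul_of_nonneg_right h3 (Real.exp_pos _).le
        _ = Real.exp (-(m + δ) / ε ^ 2) * KU := mul_comm _ _
    -- denominator bound
    have hD : Real.exp (-(m + δ / 2) / ε ^ 2) * KO ≤
        ∫ x, Real.exp (-U x / ε ^ 2) ∂μ := by
      have h1 : (∫ _ in O, Real.exp (-(m + δ / 2) / ε ^ 2) ∂μ) ≤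
          ∫ x in O, Real.exp (-U x / ε ^ 2) ∂μ := by
        refine setIntegral_mono_on (integrableOn_const (measure_ne_top μ O))
          hInt.integrableOn hOmeas fun x hx => ?_
        have hx' : U x < m + δ / 2 := hx
        exact Real.exp_le_exp.2 ((div_le_div_iff_of_pos_right hε2).2 (by linarith))
      have h2 : (∫ _ in O, Real.exp (-(m + δ / 2) / ε ^ 2) ∂μ) =
          KO * Real.exp (-(m + δ / 2) / ε ^ 2) := by
        rw [setIntegral_const, smul_eq_mul]
        rfl
      have h3 : (∫ x in O, Real.exp (-U x / ε ^ 2) ∂μ) ≤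
          ∫ x, Real.exp (-U x / ε ^ 2) ∂μ :=
        setIntegral_le_integral hInt (Eventually.of_forall fun x => (Real.exp_pos _).le)
      calc Real.exp (-(m + δ / 2) / ε ^ 2) * KO
          = KO * Real.exp (-(m + δ / 2) / ε ^ 2) := mul_comm _ _
        _ ≤ ∫ x in O, Real.exp (-U x / ε ^ 2) ∂μ := h2 ▸ h1
        _ ≤ _ := h3
    have hDpos : 0 < Real.exp (-(m + δ / 2) / ε ^ 2) * KO :=
      mul_pos (Real.exp_pos _) hKOpos
    have key : (∫ x in A, Real.exp (-U x / ε ^ 2) ∂μ) /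
        (∫ x, Real.exp (-U x / ε ^ 2) ∂μ) ≤
        (Real.exp (-(m + δ) / ε ^ 2) * KU) /
          (Real.exp (-(m + δ / 2) / ε ^ 2) * KO) :=
      div_le_div₀ (mul_nonneg (Real.exp_pos _).le hKUnn) hN hDpos hD
    refine key.trans_eq ?_
    rw [mul_div_mul_comm, ← Real.exp_sub]
    congr 1
    ring
  done
end
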